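/- (Proposition 3 of the paper, channel-independent form.) Under the secrecy-code setup, I(V_A; Z | V_B) ≥ max( Σ_{i∈A} C_i + Σ_{j∈R} C_j − r , 0 ), where C_i := I(V_i; (Z, V_{{1,…,i−1}})) and r = |R|. -/

import Mathlib

open scoped Classical

noncomputable section

/-- `p` is a probability mass function on the finite sample space `Ω`. -/
def IsPMF {Ω : Type} [Fintype Ω] (p : Ω → ℝ) : Prop :=
  (∀ ω, 0 ≤ p ω) ∧ ∑ ω, p ω = 1

/-- `P(X = x)`: the probability of the event `{X = x}` under the pmf `p`. -/
def prob {Ω : Type} [Fintype Ω] (p : Ω → ℝ) {α : Type} (X : Ω → α) (x : α) : ℝ :=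
  ∑ ω, if X ω = x then p ω else 0

/-- Shannon entropy of `X` in bits (logarithm base 2). -/
def entropy {Ω : Type} [Fintype Ω] (p : Ω → ℝ) {α : Type} [Fintype α] (X : Ω → α) : ℝ :=
  -∑ x, prob p X x * Real.logb 2 (prob p X x)

/-- Mutual information `I(X;Y) = H(X) + H(Y) - H((X,Y))` in bits. -/
def mutInfo {Ω : Type} [Fintype Ω] (p : Ω → ℝ) {α β : Type} [Fintype α] [Fintype β]
    (X : Ω → α) (Y : Ω → β) : ℝ :=
  entropy p X + entropy p Y - entropy p fun ω => (X ω, Y ω)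

/-- Conditional mutual information
`I(X;Y∣W) = H((X,W)) + H((Y,W)) - H((X,Y,W)) - H(W)` in bits. -/
def condMutInfo {Ω : Type} [Fintype Ω] (p : Ω → ℝ) {α β γ : Type}
    [Fintype α] [Fintype β] [Fintype γ] (X : Ω → α) (Y : Ω → β) (W : Ω → γ) : ℝ :=
  entropy p (fun ω => (X ω, W ω)) + entropy p (fun ω => (Y ω, W ω))
    - entropy p (fun ω => (X ω, Y ω, W ω)) - entropy p W

section Basics
variable {Ω : Type} [Fintype Ω] (p : Ω → ℝ)

lemma prob_nonneg (hp : IsPMF p) {α : Type} (X : Ω → α) (x : α) : 0 ≤ prob p X x := by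
  apply Finset.sum_nonneg; intro ω _
  split <;> simp [hp.1 ω]

lemma sum_prob (hp : IsPMF p) {α : Type} [Fintype α] (X : Ω → α) :
    ∑ x, prob p X x = 1 := by
  unfold prob
  rw [Finset.sum_comm]
  simp [hp.2]

lemma prob_comp {α β : Type} [Fintype α] [DecidableEq β] (X : Ω → α) (g : α → β) (y : β) :
    prob p (fun ω => g (X ω)) y = ∑ x, if g x = y then prob p X x else 0 := by
  have step : ∑ ω, (if g (X ω) = y then p ω else 0)
      = ∑ x, if g x = y then prob p X x else 0 := by
    unfold prob
    rw [eq_comm]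
    calc ∑ x : α, (if g x = y then ∑ ω, if X ω = x then p ω else 0 else 0)
        = ∑ x : α, ∑ ω, (if g x = y then (if X ω = x then p ω else 0) else 0) := by
          apply Finset.sum_congr rfl; intro x _; split <;> simp
      _ = ∑ ω, ∑ x : α, (if g x = y then (if X ω = x then p ω else 0) else 0) :=
          Finset.sum_comm
      _ = ∑ ω, (if g (X ω) = y then p ω else 0) := by
          apply Finset.sum_congr rfl; intro ω _
          rw [Finset.sum_eq_single (X ω)]
          · simp
          · intro x _ hx; simp [Ne.symm hx]
          · simp
  rw [← step]
  unfold prob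
  apply Finset.sum_congr rfl
  intro ω _
  by_cases h : g (X ω) = y <;> simp [h]

/-- generic marginalization-sum identity -/
lemma sum_marg {τ δ : Type} [Fintype τ] [Fintype δ] [DecidableEq δ] (q : τ → ℝ) (π : τ → δ) (F : δ → ℝ) :
    ∑ d, (∑ t, if π t = d then q t else 0) * F d = ∑ t, q t * F (π t) := by
  have : ∀ d, (∑ t, if π t = d then q t else 0) * F d
      = ∑ t, if π t = d then q t * F (π t) else 0 := by
    intro d
    rw [Finset.sum_mul]
    apply Finset.sum_congr rfl
    intro t _
    by_cases h : π t = d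
    · simp [h]
    · simp [h]
  rw [Finset.sum_congr rfl (fun d _ => this d)]
  rw [Finset.sum_comm]
  apply Finset.sum_congr rfl
  intro t _
  simp

lemma entropy_comp_as_sum {τ δ : Type} [Fintype τ] [Fintype δ] (X : Ω → τ) (π : τ → δ) :
    entropy p (fun ω => π (X ω))
      = -∑ t, prob p X t * Real.logb 2 (prob p (fun ω => π (X ω)) (π t)) := by
  unfold entropy
  congr 1
  have h : ∀ d, prob p (fun ω => π (X ω)) d = ∑ t, if π t = d then prob p X t else 0 :=
    prob_comp p X π
  calc ∑ d, prob p (fun ω => π (X ω)) d * Real.logb 2 (prob p (fun ω => π (X ω)) d)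
      = ∑ d, (∑ t, if π t = d then prob p X t else 0)
          * Real.logb 2 (prob p (fun ω => π (X ω)) d) := by
        apply Finset.sum_congr rfl; intro d _; rw [h]
    _ = ∑ t, prob p X t * Real.logb 2 (prob p (fun ω => π (X ω)) (π t)) :=
        sum_marg _ π _

end Basics

section Determines
variable {Ω : Type} [Fintype Ω] (p : Ω → ℝ)

lemma prob_comp_inj {α β : Type} [Fintype α] (X : Ω → α) {f : α → β}
    (hf : Function.Injective f) (x : α) :
    prob p (fun ω => f (X ω)) (f x) = prob p X x := by
  unfold prob
  apply Finset.sum_congr rfl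
  intro ω _
  congr 1
  simp only [eq_iff_iff]
  exact ⟨fun h => hf h, fun h => by rw [h]⟩

lemma entropy_comp_inj {α β : Type} [Fintype α] [Fintype β] (X : Ω → α) {f : α → β}
    (hf : Function.Injective f) : entropy p (fun ω => f (X ω)) = entropy p X := by
  unfold entropy
  congr 1
  rw [← Finset.sum_subset (Finset.subset_univ (Finset.univ.image f))]
  · rw [Finset.sum_image (fun a _ b _ h => hf h)]
    apply Finset.sum_congr rfl
    intro x _
    rw [prob_comp_inj p X hf]
  · intro y _ hy
    have h0 : prob p (fun ω => f (X ω)) y = 0 := by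
      apply Finset.sum_eq_zero
      intro ω _
      have : ¬ f (X ω) = y := by
        intro h
        exact hy (Finset.mem_image.2 ⟨X ω, Finset.mem_univ _, h⟩)
      simp [this]
    simp [h0]

lemma entropy_eq_of_determines {α β : Type} [Fintype α] [Fintype β]
    (X : Ω → α) (Y : Ω → β) (f : α → β) (g : β → α)
    (hf : ∀ ω, f (X ω) = Y ω) (hg : ∀ ω, g (Y ω) = X ω) :
    entropy p X = entropy p Y := by
  have h1 : entropy p (fun ω => (X ω, Y ω)) = entropy p X := by
    have : (fun ω => (X ω, Y ω)) = fun ω => ((fun x => (x, f x)) (X ω)) := by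
      funext ω; simp [hf ω]
    rw [this]
    exact entropy_comp_inj p X (f := fun x => (x, f x))
      (fun a b h => congrArg Prod.fst h)
  have h2 : entropy p (fun ω => (Y ω, X ω)) = entropy p Y := by
    have : (fun ω => (Y ω, X ω)) = fun ω => ((fun y => (y, g y)) (Y ω)) := by
      funext ω; simp [hg ω]
    rw [this]
    exact entropy_comp_inj p Y (f := fun y => (y, g y))
      (fun a b h => congrArg Prod.fst h)
  have h3 : entropy p (fun ω => (Y ω, X ω)) = entropy p (fun ω => (X ω, Y ω)) := by
    have : (fun ω => (Y ω, X ω))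
        = fun ω => ((fun t : α × β => (t.2, t.1)) ((fun ω => (X ω, Y ω)) ω)) := rfl
    rw [this]
    exact entropy_comp_inj p (fun ω => (X ω, Y ω)) (f := fun t : α × β => (t.2, t.1))
      (fun a b h => by
        cases a; cases b
        simp only [Prod.mk.injEq] at h ⊢
        exact ⟨h.2, h.1⟩)
  rw [← h1, ← h2, h3]

end Determines

section CMI
variable {Ω : Type} [Fintype Ω] (p : Ω → ℝ)

lemma condMutInfo_nonneg (hp : IsPMF p) {α β γ : Type}
    [Fintype α] [Fintype β] [Fintype γ] (X : Ω → α) (Y : Ω → β) (W : Ω → γ) :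
    0 ≤ condMutInfo p X Y W := by
  set T : Ω → α × β × γ := fun ω => (X ω, Y ω, W ω) with hT
  set q : α × β × γ → ℝ := prob p T with hq
  set a : α × γ → ℝ := prob p (fun ω => (X ω, W ω)) with haa
  set b : β × γ → ℝ := prob p (fun ω => (Y ω, W ω)) with hbb
  set c : γ → ℝ := prob p W with hcc
  have hq0 : ∀ t, 0 ≤ q t := fun t => prob_nonneg p hp T t
  have ha0 : ∀ y, 0 ≤ a y := fun y => prob_nonneg p hp _ y
  have hb0 : ∀ y, 0 ≤ b y := fun y => prob_nonneg p hp _ y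
  have hc0 : ∀ w, 0 ≤ c w := fun w => prob_nonneg p hp _ w
  have ha : ∀ y : α × γ, a y = ∑ t, if (t.1, t.2.2) = y then q t else 0 :=
    fun y => prob_comp p T (fun t => (t.1, t.2.2)) y
  have hb : ∀ y : β × γ, b y = ∑ t, if t.2 = y then q t else 0 :=
    fun y => prob_comp p T (fun t => t.2) y
  have hc : ∀ w : γ, c w = ∑ t, if t.2.2 = w then q t else 0 :=
    fun w => prob_comp p T (fun t => t.2.2) w
  have hqa : ∀ t, q t ≤ a (t.1, t.2.2) := by
    intro t
    rw [ha]
    have := Finset.single_le_sum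
      (f := fun t' : α × β × γ => if (t'.1, t'.2.2) = (t.1, t.2.2) then q t' else 0)
      (fun i _ => by split <;> simp [hq0 i]) (Finset.mem_univ t)
    simpa using this
  have hqb : ∀ t, q t ≤ b t.2 := by
    intro t
    rw [hb]
    have := Finset.single_le_sum
      (f := fun t' : α × β × γ => if t'.2 = t.2 then q t' else 0)
      (fun i _ => by split <;> simp [hq0 i]) (Finset.mem_univ t)
    simpa using this
  have hac : ∀ t : α × β × γ, a (t.1, t.2.2) ≤ c t.2.2 := by
    intro t
    rw [ha, hc]
    apply Finset.sum_le_sum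
    intro i _
    by_cases h : (i.1, i.2.2) = (t.1, t.2.2)
    · have h1 : i.1 = t.1 := by rw [Prod.ext_iff] at h; exact h.1
      have h2 : i.2.2 = t.2.2 := by rw [Prod.ext_iff] at h; exact h.2
      simp [h1, h2]
    · rw [if_neg h]
      split
      · exact hq0 i
      · exact le_refl 0
  have hbc : ∀ t : α × β × γ, b t.2 ≤ c t.2.2 := by
    intro t
    rw [hb, hc]
    apply Finset.sum_le_sum
    intro i _
    by_cases h : i.2 = t.2
    · have h2 : i.2.2 = t.2.2 := by rw [h]
      simp [h, h2]
    · rw [if_neg h]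
      split
      · exact hq0 i
      · exact le_refl 0
  have hsuma : ∀ w, ∑ x, a (x, w) = c w := by
    intro w
    rw [hc]
    have : ∀ x, a (x, w) = ∑ t, if (t.1, t.2.2) = (x, w) then q t else 0 := fun x => ha _
    rw [Finset.sum_congr rfl (fun x _ => this x), Finset.sum_comm]
    apply Finset.sum_congr rfl
    intro t _
    rw [Finset.sum_eq_single t.1]
    · by_cases h : t.2.2 = w <;> simp [Prod.ext_iff, h]
    · intro x _ hx
      have hne : ¬ (t.1, t.2.2) = (x, w) := fun h => hx (by
        rw [Prod.ext_iff] at h; exact h.1.symm)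
      simp [hne]
    · simp
  have hsumb : ∀ w, ∑ y, b (y, w) = c w := by
    intro w
    rw [hc]
    have : ∀ y, b (y, w) = ∑ t, if t.2 = (y, w) then q t else 0 := fun y => hb _
    rw [Finset.sum_congr rfl (fun y _ => this y), Finset.sum_comm]
    apply Finset.sum_congr rfl
    intro t _
    rw [Finset.sum_eq_single t.2.1]
    · by_cases h : t.2.2 = w <;> simp [Prod.ext_iff, h]
    · intro y _ hy
      have hne : ¬ t.2 = (y, w) := fun h => hy (by
        rw [Prod.ext_iff] at h; exact h.1.symm)
      simp [hne]
    · simp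
  have htotal : ∑ t, q t = 1 := sum_prob p hp T
  have hctotal : ∑ w, c w = 1 := sum_prob p hp W
  -- rewrite condMutInfo as a single sum
  have e1 : entropy p (fun ω => (X ω, W ω))
      = -∑ t, q t * Real.logb 2 (a (t.1, t.2.2)) :=
    entropy_comp_as_sum p T (fun t => (t.1, t.2.2))
  have e2 : entropy p (fun ω => (Y ω, W ω))
      = -∑ t, q t * Real.logb 2 (b t.2) :=
    entropy_comp_as_sum p T (fun t => t.2)
  have e3 : entropy p (fun ω => (X ω, Y ω, W ω))
      = -∑ t, q t * Real.logb 2 (q t) := by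
    have := entropy_comp_as_sum p T (fun t => t)
    simpa using this
  have e4 : entropy p W = -∑ t, q t * Real.logb 2 (c t.2.2) :=
    entropy_comp_as_sum p T (fun t => t.2.2)
  have comb : condMutInfo p X Y W
      = ∑ t, (q t * Real.logb 2 (q t) + q t * Real.logb 2 (c t.2.2)
          - q t * Real.logb 2 (a (t.1, t.2.2)) - q t * Real.logb 2 (b t.2)) := by
    unfold condMutInfo
    rw [e1, e2, e3, e4, Finset.sum_sub_distrib, Finset.sum_sub_distrib,
      Finset.sum_add_distrib]
    ring
  -- the pointwise lower bound
  set L2 : ℝ := Real.log 2 with hL2def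
  have hL2 : 0 < L2 := Real.log_pos one_lt_two
  set At : α × β × γ → ℝ :=
    fun t => if q t = 0 then 0 else a (t.1, t.2.2) * b t.2 / c t.2.2 with hAt
  have step1 : ∀ t, (q t - At t) / L2
      ≤ q t * Real.logb 2 (q t) + q t * Real.logb 2 (c t.2.2)
        - q t * Real.logb 2 (a (t.1, t.2.2)) - q t * Real.logb 2 (b t.2) := by
    intro t
    by_cases hqz : q t = 0
    · simp [hAt, hqz]
    · have hqpos : 0 < q t := lt_of_le_of_ne (hq0 t) (Ne.symm hqz)
      have hapos : 0 < a (t.1, t.2.2) := lt_of_lt_of_le hqpos (hqa t)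
      have hbpos : 0 < b t.2 := lt_of_lt_of_le hqpos (hqb t)
      have hcpos : 0 < c t.2.2 := lt_of_lt_of_le hapos (hac t)
      have hAeq : At t = a (t.1, t.2.2) * b t.2 / c t.2.2 := by simp [hAt, hqz]
      set u : ℝ := (q t * c t.2.2) / (a (t.1, t.2.2) * b t.2) with hu
      have hupos : 0 < u :=
        div_pos (mul_pos hqpos hcpos) (mul_pos hapos hbpos)
      have hlogu : q t * Real.logb 2 (q t) + q t * Real.logb 2 (c t.2.2)
          - q t * Real.logb 2 (a (t.1, t.2.2)) - q t * Real.logb 2 (b t.2)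
          = q t * (Real.log u / L2) := by
        rw [hu]
        unfold Real.logb
        rw [Real.log_div (ne_of_gt (mul_pos hqpos hcpos)) (ne_of_gt (mul_pos hapos hbpos)),
          Real.log_mul (ne_of_gt hqpos) (ne_of_gt hcpos),
          Real.log_mul (ne_of_gt hapos) (ne_of_gt hbpos)]
        field_simp
        ring
      rw [hlogu, hAeq]
      rw [mul_div_assoc' (q t) (Real.log u) L2, div_le_div_iff_of_pos_right hL2]
      have h1 : Real.log u⁻¹ ≤ u⁻¹ - 1 :=
        Real.log_le_sub_one_of_pos (inv_pos.2 hupos)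
      have h3 : q t * Real.log u⁻¹ ≤ q t * (u⁻¹ - 1) :=
        mul_le_mul_of_nonneg_left h1 (le_of_lt hqpos)
      have h4 : q t * (u⁻¹ - 1) = a (t.1, t.2.2) * b t.2 / c t.2.2 - q t := by
        rw [hu, inv_div]
        field_simp
      have h5 : q t * Real.log u = -(q t * Real.log u⁻¹) := by
        rw [Real.log_inv]; ring
      rw [h5]
      linarith [h3, h4]
  -- sum of At is at most 1
  have step2 : ∑ t, At t ≤ 1 := by
    have hA2 : ∀ t, At t ≤ (if c t.2.2 = 0 then 0
        else a (t.1, t.2.2) * b t.2 / c t.2.2) := by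
      intro t
      by_cases hqz : q t = 0
      · simp only [hAt, hqz, if_true]
        split
        · exact le_refl 0
        · exact div_nonneg (mul_nonneg (ha0 _) (hb0 _)) (hc0 _)
      · have hqpos : 0 < q t := lt_of_le_of_ne (hq0 t) (Ne.symm hqz)
        have hcpos : 0 < c t.2.2 :=
          lt_of_lt_of_le (lt_of_lt_of_le hqpos (hqa t)) (hac t)
        simp [hAt, hqz, ne_of_gt hcpos]
    calc ∑ t, At t ≤ ∑ t : α × β × γ, (if c t.2.2 = 0 then 0
          else a (t.1, t.2.2) * b t.2 / c t.2.2) := Finset.sum_le_sum (fun t _ => hA2 t)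
      _ = ∑ w, ∑ x, ∑ y, (if c w = 0 then 0 else a (x, w) * b (y, w) / c w) := by
          rw [Fintype.sum_prod_type]
          have inner : ∀ x : α, ∑ s : β × γ,
              (if c s.2 = 0 then 0 else a (x, s.2) * b s / c s.2)
              = ∑ w, ∑ y, (if c w = 0 then 0 else a (x, w) * b (y, w) / c w) := by
            intro x
            rw [Fintype.sum_prod_type]
            exact Finset.sum_comm
          rw [Finset.sum_congr rfl (fun x _ => inner x)]
          exact Finset.sum_comm
      _ = ∑ w, (if c w = 0 then 0 else c w) := by
          apply Finset.sum_congr rfl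
          intro w _
          by_cases hcz : c w = 0
          · simp [hcz]
          · simp only [hcz, if_false]
            have hx : ∀ x : α, ∑ y, a (x, w) * b (y, w) / c w = a (x, w) := by
              intro x
              rw [← Finset.sum_div, ← Finset.mul_sum, hsumb]
              field_simp
            rw [Finset.sum_congr rfl (fun x _ => hx x), hsuma]
      _ ≤ ∑ w, c w := by
          apply Finset.sum_le_sum
          intro w _
          split
          · exact hc0 w
          · exact le_refl _
      _ = 1 := hctotal
  -- conclude
  rw [comb]
  calc (0:ℝ) ≤ (1 - ∑ t, At t) / L2 := by
        apply div_nonneg _ (le_of_lt hL2)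
        linarith [step2]
    _ = ∑ t, (q t - At t) / L2 := by
        rw [← htotal, ← Finset.sum_sub_distrib, Finset.sum_div]
    _ ≤ _ := Finset.sum_le_sum (fun t _ => step1 t)

end CMI

section Mono
variable {Ω : Type} [Fintype Ω] (p : Ω → ℝ)

lemma entropy_snd_le (hp : IsPMF p) {α β : Type} [Fintype α] [Fintype β]
    (X : Ω → α) (Y : Ω → β) :
    entropy p Y ≤ entropy p (fun ω => (X ω, Y ω)) := by
  have h := condMutInfo_nonneg p hp X X Y
  have hd : entropy p (fun ω => (X ω, X ω, Y ω))
      = entropy p (fun ω => (X ω, Y ω)) :=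
    entropy_eq_of_determines p _ _ (fun t : α × α × β => (t.1, t.2.2))
      (fun s : α × β => (s.1, s.1, s.2)) (fun ω => rfl) (fun ω => rfl)
  unfold condMutInfo at h
  rw [hd] at h
  linarith

lemma entropy_fst_le (hp : IsPMF p) {α β : Type} [Fintype α] [Fintype β]
    (X : Ω → α) (Y : Ω → β) :
    entropy p X ≤ entropy p (fun ω => (X ω, Y ω)) := by
  have hswap : entropy p (fun ω => (Y ω, X ω)) = entropy p (fun ω => (X ω, Y ω)) :=
    entropy_eq_of_determines p _ _ (fun t : β × α => (t.2, t.1))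
      (fun s : α × β => (s.2, s.1)) (fun ω => rfl) (fun ω => rfl)
  have := entropy_snd_le p hp Y X
  linarith

lemma entropy_comp_le (hp : IsPMF p) {α β : Type} [Fintype α] [Fintype β]
    (X : Ω → α) (f : α → β) :
    entropy p (fun ω => f (X ω)) ≤ entropy p X := by
  have h1 : entropy p (fun ω => f (X ω))
      ≤ entropy p (fun ω => (f (X ω), X ω)) :=
    entropy_fst_le p hp (fun ω => f (X ω)) X
  have h2 : entropy p (fun ω => (f (X ω), X ω)) = entropy p X :=
    entropy_eq_of_determines p _ _ (fun t : β × α => t.2)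
      (fun x : α => (f x, x)) (fun ω => rfl) (fun ω => rfl)
  linarith

/-- Conditioning on more information (a refinement `W` of `U`) reduces conditional
entropy: `H(X∣U) ≥ H(X∣W)` when `U` is a function of `W`. -/
lemma cond_reduce (hp : IsPMF p) {α γ δ : Type} [Fintype α] [Fintype γ] [Fintype δ]
    (X : Ω → α) (W : Ω → γ) (U : Ω → δ) (u : γ → δ) (hu : ∀ ω, u (W ω) = U ω) :
    entropy p (fun ω => (X ω, W ω)) - entropy p W
      ≤ entropy p (fun ω => (X ω, U ω)) - entropy p U := by
  have h := condMutInfo_nonneg p hp X W U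
  have hWU : entropy p (fun ω => (W ω, U ω)) = entropy p W :=
    entropy_eq_of_determines p _ _ (fun t : γ × δ => t.1)
      (fun w : γ => (w, u w)) (fun ω => rfl) (fun ω => by
        show (W ω, u (W ω)) = (W ω, U ω)
        rw [hu ω])
  have hXWU : entropy p (fun ω => (X ω, W ω, U ω)) = entropy p (fun ω => (X ω, W ω)) :=
    entropy_eq_of_determines p _ _ (fun t : α × γ × δ => (t.1, t.2.1))
      (fun s : α × γ => (s.1, s.2, u s.2)) (fun ω => rfl) (fun ω => by
        show (X ω, W ω, u (W ω)) = (X ω, W ω, U ω)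
        rw [hu ω])
  unfold condMutInfo at h
  rw [hWU, hXWU] at h
  linarith

end Mono

section Uniform
variable {Ω : Type} [Fintype Ω] (p : Ω → ℝ)

lemma prob_VS (hp : IsPMF p) {n : ℕ} (V : Fin n → Ω → Bool)
    (hV : ∀ v : Fin n → Bool, prob p (fun ω i => V i ω) v = (1 / 2 : ℝ) ^ n)
    (S : Finset (Fin n)) (v : {i // i ∈ S} → Bool) :
    prob p (fun ω (i : {i // i ∈ S}) => V i.1 ω) v = (1 / 2 : ℝ) ^ S.card := by
  classical
  have hs : S.card ≤ n := by
    have := Finset.card_le_univ S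
    simpa using this
  set Full : Ω → (Fin n → Bool) := fun ω i => V i ω with hFull
  set restr : (Fin n → Bool) → ({i // i ∈ S} → Bool) := fun w i => w i.1 with hrestr
  have key : prob p (fun ω (i : {i // i ∈ S}) => V i.1 ω) v
      = prob p (fun ω => restr (Full ω)) v := rfl
  rw [key, prob_comp p Full restr v]
  have hterm : ∀ w : Fin n → Bool,
      (if restr w = v then prob p Full w else 0)
      = (if restr w = v then ((1:ℝ)/2)^n else 0) := by
    intro w
    rw [hV w]
  rw [Finset.sum_congr rfl (fun w _ => hterm w), ← Finset.sum_filter,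
    Finset.sum_const, nsmul_eq_mul]
  have hcard : (Finset.univ.filter (fun w : Fin n → Bool => restr w = v)).card
      = 2 ^ (n - S.card) := by
    rw [← Fintype.card_subtype]
    have e1 : {w : Fin n → Bool // restr w = v}
        ≃ {y : ({i : Fin n // i ∈ S} → Bool) × ({i : Fin n // ¬ i ∈ S} → Bool) // y.1 = v} :=
      Equiv.subtypeEquiv
        (Equiv.piEquivPiSubtypeProd (fun i : Fin n => i ∈ S) (fun _ => Bool))
        (fun w => Iff.rfl)
    have e2 : {y : ({i : Fin n // i ∈ S} → Bool) × ({i : Fin n // ¬ i ∈ S} → Bool) // y.1 = v}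
        ≃ ({i : Fin n // ¬ i ∈ S} → Bool) :=
      { toFun := fun y => y.1.2
        invFun := fun b => ⟨(v, b), rfl⟩
        left_inv := by
          rintro ⟨⟨a, b⟩, h⟩
          simp only [Subtype.mk.injEq, Prod.mk.injEq]
          exact ⟨h.symm, trivial⟩
        right_inv := fun b => rfl }
    have e := e1.trans e2
    rw [Fintype.card_congr e, Fintype.card_fun, Fintype.card_bool,
      Fintype.card_subtype_compl, Fintype.card_fin, Fintype.card_coe]
  rw [hcard]
  push_cast
  have hsplit : ((1:ℝ)/2)^n = ((1:ℝ)/2)^(n - S.card) * ((1:ℝ)/2)^S.card := by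
    rw [← pow_add, Nat.sub_add_cancel hs]
  rw [hsplit, ← mul_assoc, ← mul_pow]
  norm_num

lemma entropy_VS (hp : IsPMF p) {n : ℕ} (V : Fin n → Ω → Bool)
    (hV : ∀ v : Fin n → Bool, prob p (fun ω i => V i ω) v = (1 / 2 : ℝ) ^ n)
    (S : Finset (Fin n)) :
    entropy p (fun ω (i : {i // i ∈ S}) => V i.1 ω) = (S.card : ℝ) := by
  classical
  unfold entropy
  rw [Finset.sum_congr rfl (fun v _ => by rw [prob_VS p hp V hV S v])]
  rw [Finset.sum_const, nsmul_eq_mul]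
  have hcard : (Finset.univ : Finset ({i // i ∈ S} → Bool)).card = 2 ^ S.card := by
    rw [Finset.card_univ, Fintype.card_fun, Fintype.card_bool, Fintype.card_coe]
  rw [hcard]
  have hlog : Real.logb 2 (((1:ℝ)/2) ^ S.card) = -(S.card : ℝ) := by
    rw [Real.logb_pow]
    rw [show ((1:ℝ)/2) = (2:ℝ)⁻¹ by norm_num, Real.logb_inv,
      Real.logb_self_eq_one (by norm_num)]
    ring
  rw [hlog]
  push_cast
  have h1 : ((2:ℝ))^S.card * ((1:ℝ)/2)^S.card = 1 := by
    rw [← mul_pow]; norm_num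
  calc -((2:ℝ)^S.card * (((1:ℝ)/2)^S.card * -(S.card:ℝ)))
      = ((2:ℝ)^S.card * ((1:ℝ)/2)^S.card) * (S.card:ℝ) := by ring
    _ = (S.card : ℝ) := by rw [h1]; ring

end Uniform

set_option maxHeartbeats 1600000 in
/-- **Proposition 3** (channel-independent form). In the secrecy-code setup —
`V 1, …, V n` i.i.d. uniform bits, `Z` arbitrary, `{1,…,n} = A ∪ R ∪ B` a partition —
`I(V_A ; Z ∣ V_B) ≥ max (∑_{i∈A} C_i + ∑_{j∈R} C_j − r) 0`,
where `C_i = I(V i ; (Z, V_{<i}))` and `r = |R|`. -/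
theorem stmt3 {Ω : Type} [Fintype Ω] (p : Ω → ℝ) (hp : IsPMF p)
    {n : ℕ} (V : Fin n → Ω → Bool) {ζ : Type} [Fintype ζ] (Z : Ω → ζ)
    (hV : ∀ v : Fin n → Bool, prob p (fun ω i => V i ω) v = (1 / 2 : ℝ) ^ n)
    (A R B : Finset (Fin n))
    (hAR : Disjoint A R) (hAB : Disjoint A B) (hRB : Disjoint R B)
    (hcover : A ∪ R ∪ B = Finset.univ) :
    condMutInfo p (fun ω (i : {i // i ∈ A}) => V i.1 ω) Z
        (fun ω (i : {i // i ∈ B}) => V i.1 ω)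
      ≥ max ((∑ i ∈ A, mutInfo p (V i)
              (fun ω => (Z ω, fun j : Fin i.val => V (Fin.castLE i.isLt.le j) ω)))
          + (∑ i ∈ R, mutInfo p (V i)
              (fun ω => (Z ω, fun j : Fin i.val => V (Fin.castLE i.isLt.le j) ω)))
          - (R.card : ℝ)) 0 := by
  classical
  -- entropy of a single bit
  have hVi1 : ∀ i : Fin n, entropy p (V i) = 1 := by
    intro i
    have h2 : entropy p (V i)
        = entropy p (fun ω (j : {x // x ∈ ({i} : Finset (Fin n))}) => V j.1 ω) :=
      entropy_eq_of_determines p (V i) _ (fun x _ => x)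
        (fun v => v ⟨i, Finset.mem_singleton_self i⟩)
        (fun ω => by
          funext j
          rcases j with ⟨j, hj⟩
          rw [Finset.mem_singleton] at hj
          subst hj
          rfl)
        (fun ω => rfl)
    rw [h2, entropy_VS p hp V hV]
    simp
  -- the chain-rule induction
  have main : ∀ m : ℕ, m ≤ n →
      entropy p (fun ω => ((fun (i : {x // x ∈ (A ∪ R).filter (fun j : Fin n => (j : ℕ) < m)}) =>
            V i.1 ω), Z ω, (fun (i : {i // i ∈ B}) => V i.1 ω)))
        - entropy p (fun ω => (Z ω, (fun (i : {i // i ∈ B}) => V i.1 ω)))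
      ≤ ∑ i ∈ (A ∪ R).filter (fun j : Fin n => (j : ℕ) < m),
          (1 - mutInfo p (V i)
            (fun ω => (Z ω, fun j : Fin i.val => V (Fin.castLE i.isLt.le j) ω))) := by
    intro m
    induction m with
    | zero =>
      intro _
      have hD0 : (A ∪ R).filter (fun j : Fin n => (j : ℕ) < 0) = ∅ := by
        apply Finset.filter_false_of_mem
        intro j _
        omega
      rw [hD0]
      have heq : entropy p (fun ω =>
            ((fun (i : {x // x ∈ (∅ : Finset (Fin n))}) => V i.1 ω), Z ω,
              (fun (i : {i // i ∈ B}) => V i.1 ω)))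
          = entropy p (fun ω => (Z ω, (fun (i : {i // i ∈ B}) => V i.1 ω))) :=
        entropy_eq_of_determines p _ _ (fun s => s.2)
          (fun s => ((fun i => (Finset.notMem_empty i.1 i.2).elim), s))
          (fun ω => rfl)
          (fun ω => by
            congr 1
            funext j
            exact (Finset.notMem_empty j.1 j.2).elim)
      rw [heq]
      simp
    | succ m ih =>
      intro hm1
      have hm' : m ≤ n := Nat.le_of_succ_le hm1
      have hmn : m < n := Nat.lt_of_succ_le hm1
      set i : Fin n := ⟨m, hmn⟩ with hidef
      have him : (i : ℕ) = m := rfl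
      set Dm : Finset (Fin n) := (A ∪ R).filter (fun j : Fin n => (j : ℕ) < m) with hDm
      by_cases hi : i ∈ A ∪ R
      · have hD : (A ∪ R).filter (fun j : Fin n => (j : ℕ) < m + 1) = insert i Dm := by
          ext j
          simp only [Finset.mem_filter, Finset.mem_insert, hDm]
          constructor
          · rintro ⟨hj, hlt⟩
            by_cases h : (j : ℕ) < m
            · exact Or.inr ⟨hj, h⟩
            · left
              apply Fin.ext
              show (j : ℕ) = m
              omega
          · rintro (h | ⟨hj, hlt⟩)
            · subst h
              exact ⟨hi, by omega⟩
            · exact ⟨hj, by omega⟩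
        have hnotin : i ∉ Dm := by
          simp [hDm, Finset.mem_filter, him]
        rw [hD, Finset.sum_insert hnotin]
        -- key one-step inequality
        have hred := cond_reduce p hp (V i)
          (fun ω => ((fun (j : {x // x ∈ Dm}) => V j.1 ω), Z ω,
            (fun (j : {j // j ∈ B}) => V j.1 ω)))
          (fun ω => (Z ω, fun j : Fin i.val => V (Fin.castLE i.isLt.le j) ω))
          (fun s => (s.2.1, fun j : Fin i.val =>
            if h : (Fin.castLE i.isLt.le j) ∈ B then s.2.2 ⟨Fin.castLE i.isLt.le j, h⟩
            else s.1 ⟨Fin.castLE i.isLt.le j, by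
              have h1 : Fin.castLE i.isLt.le j ∈ A ∪ R ∪ B :=
                hcover ▸ Finset.mem_univ _
              have h2 : Fin.castLE i.isLt.le j ∈ A ∪ R := by
                rcases Finset.mem_union.mp h1 with h' | h'
                · exact h'
                · exact absurd h' h
              refine Finset.mem_filter.mpr ⟨h2, ?_⟩
              have := j.isLt
              simp only [Fin.coe_castLE]
              omega⟩))
          (fun ω => by
            dsimp only
            congr 1
            funext j
            by_cases h : (Fin.castLE i.isLt.le j) ∈ B
            · rw [dif_pos h]
            · rw [dif_neg h])
        have hd1 : entropy p (fun ω =>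
              ((fun (j : {x // x ∈ insert i Dm}) => V j.1 ω), Z ω,
                (fun (j : {j // j ∈ B}) => V j.1 ω)))
            = entropy p (fun ω => (V i ω,
              ((fun (j : {x // x ∈ Dm}) => V j.1 ω), Z ω,
                (fun (j : {j // j ∈ B}) => V j.1 ω)))) :=
          entropy_eq_of_determines p _ _
            (fun s => (s.1 ⟨i, Finset.mem_insert_self i Dm⟩,
              (fun j : {x // x ∈ Dm} => s.1 ⟨j.1, Finset.mem_insert_of_mem j.2⟩, s.2)))
            (fun s => ((fun j : {x // x ∈ insert i Dm} =>
              if h : j.1 = i then s.1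
              else s.2.1 ⟨j.1, (Finset.mem_insert.mp j.2).resolve_left h⟩), s.2.2))
            (fun ω => rfl)
            (fun ω => by
              dsimp only
              congr 1
              funext j
              by_cases h : j.1 = i
              · rw [dif_pos h, h]
              · rw [dif_neg h])
        have hC : mutInfo p (V i)
              (fun ω => (Z ω, fun j : Fin i.val => V (Fin.castLE i.isLt.le j) ω))
            = entropy p (V i)
              + entropy p (fun ω => (Z ω, fun j : Fin i.val => V (Fin.castLE i.isLt.le j) ω))
              - entropy p (fun ω => (V i ω,
                  (Z ω, fun j : Fin i.val => V (Fin.castLE i.isLt.le j) ω))) := rfl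
        have hih := ih hm'
        rw [hd1]
        rw [hC, hVi1 i]
        linarith [hred, hih]
      · have hD : (A ∪ R).filter (fun j : Fin n => (j : ℕ) < m + 1) = Dm := by
          ext j
          simp only [Finset.mem_filter, hDm]
          constructor
          · rintro ⟨hj, hlt⟩
            refine ⟨hj, ?_⟩
            by_contra h
            have hjm : (j : ℕ) = m := by omega
            have : j = i := Fin.ext hjm
            exact hi (this ▸ hj)
          · rintro ⟨hj, hlt⟩
            exact ⟨hj, by omega⟩
        rw [hD]
        exact ih hm'
  -- assemble
  have hDn : (A ∪ R).filter (fun j : Fin n => (j : ℕ) < n) = A ∪ R := by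
    apply Finset.filter_true_of_mem
    intro j _
    exact j.isLt
  have hchain := main n (le_refl n)
  rw [hDn] at hchain
  have hsum : ∑ i ∈ A ∪ R,
      (1 - mutInfo p (V i)
        (fun ω => (Z ω, fun j : Fin i.val => V (Fin.castLE i.isLt.le j) ω)))
      = ((A.card : ℝ) + R.card)
        - ((∑ i ∈ A, mutInfo p (V i)
              (fun ω => (Z ω, fun j : Fin i.val => V (Fin.castLE i.isLt.le j) ω)))
          + (∑ i ∈ R, mutInfo p (V i)
              (fun ω => (Z ω, fun j : Fin i.val => V (Fin.castLE i.isLt.le j) ω)))) := by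
    rw [Finset.sum_sub_distrib, Finset.sum_const, nsmul_eq_mul, mul_one,
      Finset.sum_union hAR, Finset.card_union_of_disjoint hAR]
    push_cast
    ring
  rw [hsum] at hchain
  have hAUB : entropy p (fun ω => ((fun (i : {i // i ∈ A}) => V i.1 ω),
        (fun (i : {i // i ∈ B}) => V i.1 ω)))
      = (A.card : ℝ) + B.card := by
    have h2 : entropy p (fun ω (i : {x // x ∈ A ∪ B}) => V i.1 ω)
        = entropy p (fun ω => ((fun (i : {i // i ∈ A}) => V i.1 ω),
            (fun (i : {i // i ∈ B}) => V i.1 ω))) :=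
      entropy_eq_of_determines p _ _
        (fun s => ((fun j : {i // i ∈ A} => s ⟨j.1, Finset.mem_union_left B j.2⟩),
          (fun j : {i // i ∈ B} => s ⟨j.1, Finset.mem_union_right A j.2⟩)))
        (fun s => (fun j : {x // x ∈ A ∪ B} =>
          if h : j.1 ∈ A then s.1 ⟨j.1, h⟩
          else s.2 ⟨j.1, (Finset.mem_union.mp j.2).resolve_left h⟩))
        (fun ω => rfl)
        (fun ω => by
          funext j
          dsimp only
          by_cases h : j.1 ∈ A
          · rw [dif_pos h]
          · rw [dif_neg h])
    rw [← h2, entropy_VS p hp V hV, Finset.card_union_of_disjoint hAB]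
    push_cast
    ring
  have hB' : entropy p (fun ω (i : {i // i ∈ B}) => V i.1 ω) = (B.card : ℝ) :=
    entropy_VS p hp V hV B
  have hmono : entropy p (fun ω => ((fun (i : {i // i ∈ A}) => V i.1 ω), Z ω,
        (fun (i : {i // i ∈ B}) => V i.1 ω)))
      ≤ entropy p (fun ω => ((fun (i : {x // x ∈ A ∪ R}) => V i.1 ω), Z ω,
        (fun (i : {i // i ∈ B}) => V i.1 ω))) :=
    entropy_comp_le p hp
      (fun ω => ((fun (i : {x // x ∈ A ∪ R}) => V i.1 ω), Z ω,
        (fun (i : {i // i ∈ B}) => V i.1 ω)))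
      (fun s => ((fun j : {i // i ∈ A} => s.1 ⟨j.1, Finset.mem_union_left R j.2⟩), s.2))
  have hCMI : condMutInfo p (fun ω (i : {i // i ∈ A}) => V i.1 ω) Z
        (fun ω (i : {i // i ∈ B}) => V i.1 ω)
      = entropy p (fun ω => ((fun (i : {i // i ∈ A}) => V i.1 ω),
          (fun (i : {i // i ∈ B}) => V i.1 ω)))
        + entropy p (fun ω => (Z ω, (fun (i : {i // i ∈ B}) => V i.1 ω)))
        - entropy p (fun ω => ((fun (i : {i // i ∈ A}) => V i.1 ω), Z ω,
            (fun (i : {i // i ∈ B}) => V i.1 ω)))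
        - entropy p (fun ω (i : {i // i ∈ B}) => V i.1 ω) := rfl
  rw [ge_iff_le, max_le_iff]
  constructor
  · rw [hCMI, hAUB, hB']
    linarith [hchain, hmono]
  · exact condMutInfo_nonneg p hp _ _ _
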